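/- If n_p ∈ (0,1) and a < (5/4)·n_p/(1−n_p), then both eigenvalues of the Jacobian of (f,g) at the origin (0,0) are strictly negative, so (0,0) is a linearly stable equilibrium. -/

import Mathlib

/-- If a < (5/4)·n_p/(1-n_p), both eigenvalues of the Jacobian at (0,0) are negative,
so (0,0) is linearly stable. -/
theorem dystopia_stable (np a : ℝ) (hnp : np ∈ Set.Ioo (0:ℝ) 1)
    (ha : a < (5/4) * np/(1 - np))
    (f g : ℝ → ℝ → ℝ)
    (hf : ∀ x z, f x z = (1/4) * x * (x - 1) * (-3*np*x + 5*np + 4*np*a - 4*a))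
    (hg : ∀ x z, g x z = -(1/4) * z * (z - 1) * (-16*np*z + 16*z + 5*np - 8 + 5*np*x)) :
    deriv (fun x => f x 0) 0 < 0 ∧ deriv (fun z => g 0 z) 0 < 0 := by
  obtain ⟨h0, h1⟩ := hnp
  have hid : HasDerivAt (fun x : ℝ => x) 1 0 := hasDerivAt_id 0
  have hF : HasDerivAt (fun x : ℝ => (1/4) * x * (x - 1) * (-3*np*x + 5*np + 4*np*a - 4*a))
      (-(1/4) * (5*np + 4*np*a - 4*a)) 0 := by
    have h := ((hid.const_mul (1/4 : ℝ)).mul (hid.sub_const 1)).mul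
      (((hid.const_mul (-3*np)).add_const (5*np + 4*np*a - 4*a)))
    convert h using 1
    · rfl
    · rfl
    · funext y; simp only [Pi.mul_apply]; ring
    · simp only [Pi.mul_apply]; ring
  have hG : HasDerivAt (fun z : ℝ => -(1/4) * z * (z - 1) * (-16*np*z + 16*z + 5*np - 8 + 5*np*0))
      ((1/4) * (5*np - 8)) 0 := by
    have h := ((hid.const_mul (-(1/4) : ℝ)).mul (hid.sub_const 1)).mul
      (((hid.const_mul (-16*np + 16)).add_const (5*np - 8 + 5*np*0)))
    convert h using 1
    · rfl
    · rfl
    · funext y; simp only [Pi.mul_apply]; ring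
    · simp only [Pi.mul_apply]; ring
  have hfun1 : (fun x => f x 0) = fun x : ℝ => (1/4) * x * (x - 1) * (-3*np*x + 5*np + 4*np*a - 4*a) := by
    funext x; rw [hf]
  have hfun2 : (fun z => g 0 z) = fun z : ℝ => -(1/4) * z * (z - 1) * (-16*np*z + 16*z + 5*np - 8 + 5*np*0) := by
    funext z; rw [hg]
  rw [hfun1, hfun2, hF.deriv, hG.deriv]
  have h2 : (0:ℝ) < 1 - np := by linarith
  have key : a * (1 - np) < (5/4) * np := (lt_div_iff₀ h2).mp ha
  constructor
  · nlinarith [key]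
  · nlinarith
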